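/- Let A ∈ M_{2m}(ℝ) and B ∈ M_{2n}(ℝ) be positive definite. Then the multiset of symplectic eigenvalues of the expanding sum A ⊞ B is the union of the multisets of symplectic eigenvalues of A and of B. -/

import Mathlib

open Matrix Finset

noncomputable section

/-- The standard symplectic form matrix over index type `ι ⊕ ι`. -/
def Jm (ι : Type*) [DecidableEq ι] : Matrix (ι ⊕ ι) (ι ⊕ ι) ℝ :=
  Matrix.fromBlocks 0 1 (-1) 0

/-- `W` is symplectic if `Wᵀ J W = J`. -/
def IsSymplectic {ι : Type*} [Fintype ι] [DecidableEq ι] (W : Matrix (ι ⊕ ι) (ι ⊕ ι) ℝ) : Prop :=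
  Wᵀ * Jm ι * W = Jm ι


/-- Expanding sum of two matrices in 2×2 block form. -/
def esum {α β : Type*} (A : Matrix (α ⊕ α) (α ⊕ α) ℝ) (B : Matrix (β ⊕ β) (β ⊕ β) ℝ) :
    Matrix ((α ⊕ β) ⊕ (α ⊕ β)) ((α ⊕ β) ⊕ (α ⊕ β)) ℝ :=
  Matrix.fromBlocks
    (Matrix.fromBlocks A.toBlocks₁₁ 0 0 B.toBlocks₁₁)
    (Matrix.fromBlocks A.toBlocks₁₂ 0 0 B.toBlocks₁₂)
    (Matrix.fromBlocks A.toBlocks₂₁ 0 0 B.toBlocks₂₁)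
    (Matrix.fromBlocks A.toBlocks₂₂ 0 0 B.toBlocks₂₂)


/-- Multiset of moduli of the complex eigenvalues of `J * A`; each symplectic
eigenvalue of `A` occurs twice in this multiset. -/
def sympModuli {ι : Type*} [Fintype ι] [DecidableEq ι] (A : Matrix (ι ⊕ ι) (ι ⊕ ι) ℝ) :
    Multiset ℝ :=
  (((Jm ι * A).map (Complex.ofReal ·)).charpoly.roots).map (‖·‖)


section Aux

variable {α β : Type*} [DecidableEq α] [DecidableEq β] [Fintype α] [Fintype β]

set_option linter.unusedSectionVars false in
lemma Jm_reindex :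
    (Matrix.reindex (Equiv.sumSumSumComm α β α β) (Equiv.sumSumSumComm α β α β) (Jm (α ⊕ β)))
      = Matrix.fromBlocks (Jm α) 0 0 (Jm β) := by
  ext i j
  rcases i with (i|i) | (i|i) <;> rcases j with (j|j) | (j|j) <;>
    simp [Jm, Matrix.reindex, Equiv.sumSumSumComm, Matrix.one_apply]

set_option linter.unusedSectionVars false in
lemma esum_reindex (A : Matrix (α ⊕ α) (α ⊕ α) ℝ) (B : Matrix (β ⊕ β) (β ⊕ β) ℝ) :
    (Matrix.reindex (Equiv.sumSumSumComm α β α β) (Equiv.sumSumSumComm α β α β) (esum A B))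
      = Matrix.fromBlocks A 0 0 B := by
  ext i j
  rcases i with (i|i) | (i|i) <;> rcases j with (j|j) | (j|j) <;>
    simp [esum, Matrix.reindex, Equiv.sumSumSumComm, Matrix.toBlocks₁₁, Matrix.toBlocks₁₂,
      Matrix.toBlocks₂₁, Matrix.toBlocks₂₂]

lemma charpoly_Jm_esum (A : Matrix (α ⊕ α) (α ⊕ α) ℝ) (B : Matrix (β ⊕ β) (β ⊕ β) ℝ) :
    (Jm (α ⊕ β) * esum A B).charpoly = (Jm α * A).charpoly * (Jm β * B).charpoly := by
  have h := Matrix.charpoly_reindex (R := ℝ) (Equiv.sumSumSumComm α β α β) (Jm (α ⊕ β) * esum A B)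
  rw [← h]
  have : (Matrix.reindex (Equiv.sumSumSumComm α β α β) (Equiv.sumSumSumComm α β α β)
      (Jm (α ⊕ β) * esum A B)) = Matrix.fromBlocks (Jm α * A) 0 0 (Jm β * B) := by
    have := Matrix.submatrix_mul_equiv (Jm (α ⊕ β)) (esum A B)
      (Equiv.sumSumSumComm α β α β).symm (Equiv.sumSumSumComm α β α β).symm
      (Equiv.sumSumSumComm α β α β).symm
    simp only [Matrix.reindex_apply] at *
    rw [← this]
    have h1 := Jm_reindex (α := α) (β := β)
    have h2 := esum_reindex A B
    simp only [Matrix.reindex_apply] at h1 h2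
    rw [h1, h2, Matrix.fromBlocks_multiply]
    simp
  rw [this, Matrix.charpoly_fromBlocks_zero₂₁]

end Aux

theorem sympModuli_esum {m n : ℕ} (A : Matrix (Fin m ⊕ Fin m) (Fin m ⊕ Fin m) ℝ)
    (B : Matrix (Fin n ⊕ Fin n) (Fin n ⊕ Fin n) ℝ) (hA : A.PosDef) (hB : B.PosDef) :
    sympModuli (esum A B) = sympModuli A + sympModuli B := by
  unfold sympModuli
  have he : (Complex.ofReal ·) = ⇑Complex.ofRealHom := rfl
  have hc : ((Jm (Fin m ⊕ Fin n) * esum A B).map (Complex.ofReal ·)).charpoly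
      = ((Jm (Fin m) * A).map (Complex.ofReal ·)).charpoly *
        ((Jm (Fin n) * B).map (Complex.ofReal ·)).charpoly := by
    rw [he, Matrix.charpoly_map _ Complex.ofRealHom, Matrix.charpoly_map _ Complex.ofRealHom,
      Matrix.charpoly_map _ Complex.ofRealHom, charpoly_Jm_esum, Polynomial.map_mul]
  rw [hc, Polynomial.roots_mul (mul_ne_zero (Matrix.charpoly_monic _).ne_zero
    (Matrix.charpoly_monic _).ne_zero), Multiset.map_add]
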